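/- The two descriptions of the Connes–Kreimer coproduct agree: for every rooted tree t, the admissible-cut coproduct satisfies Δ(t) = t⊗1 + (id⊗B_+)(Δ(B_−(t))), where B_− is the inverse of B_+ (so B_−(t) is the forest of branches of the root of t) and Δ acts multiplicatively on forests. -/

import Mathlib

/-! ### Planar rooted trees -/

/-- A planar rooted tree: a root with an ordered list of branches.
`PTree.node [T₁,…,T_k]` is `B₊(T₁⋯T_k)`; `PTree.node []` is the one-vertex tree `•`. -/
inductive PTree : Type where
  | node : List PTree → PTree

instance : Inhabited PTree := ⟨.node []⟩

noncomputable instance : DecidableEq PTree := Classical.decEq _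

/-- Number of vertices of a planar rooted tree. -/
def PTree.size : PTree → ℕ
  | .node l => 1 + (l.attach.map (fun x => PTree.size x.1)).sum
decreasing_by
  have h := List.sizeOf_lt_of_mem x.2
  simp only [PTree.node.sizeOf_spec]
  omega

/-! ### Rooted trees -/

/-- Isomorphism of the underlying rooted trees: the lists of branches agree
up to permutation and recursive isomorphism. -/
inductive PTree.Equiv : PTree → PTree → Prop where
  | node {l m m' : List PTree} :
      List.Forall₂ PTree.Equiv l m' → List.Perm m' m → PTree.Equiv (.node l) (.node m)

/-- Rooted trees: planar rooted trees modulo isomorphism. -/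
def RTree : Type := Quot PTree.Equiv

/-- The underlying rooted tree of a planar rooted tree. -/
def toR : PTree → RTree := Quot.mk _

/-- A choice of planar representative of a rooted tree. -/
noncomputable def RTree.out : RTree → PTree := Quot.out

noncomputable instance : DecidableEq RTree := Classical.decEq _

/-- The order of the symmetry group of (the underlying rooted tree of) a planar
rooted tree: `|Sym(B₊(t₁⋯t_k))| = (∏_s m_s!)·∏ᵢ |Sym(tᵢ)|`, where `m_s` is the
multiplicity of the isomorphism type `s` among the branches `t₁,…,t_k`. -/
noncomputable def PTree.symOrder : PTree → ℕ
  | .node l =>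
      (l.attach.map (fun x => PTree.symOrder x.1)).prod *
      (((l.map toR : List RTree) : Multiset RTree).toFinset.prod
        (fun s => (Multiset.count s (l.map toR : Multiset RTree)).factorial))
decreasing_by
  have h := List.sizeOf_lt_of_mem x.2
  simp only [PTree.node.sizeOf_spec]
  omega

/-- The order of the symmetry group of a rooted tree. -/
noncomputable def RTree.sym (t : RTree) : ℕ := t.out.symOrder

/-- Number of vertices of a rooted tree. -/
noncomputable def RTree.size (t : RTree) : ℕ := t.out.size

/-- `B₊` for rooted trees: attach a new root to a multiset forest. -/
noncomputable def RTree.node (m : Multiset RTree) : RTree :=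
  toR (PTree.node (m.toList.map RTree.out))

/-- The one-vertex rooted tree `•`. -/
noncomputable def RTree.bullet : RTree := toR (.node [])

/-! ### Cuts -/

/-- A decoration of (the edges of) a tree by Booleans: `true` means the edge
belongs to the cut. `Cut.node [(b₁,c₁),…,(b_k,c_k)]` matches a tree
`PTree.node [t₁,…,t_k]`, with `bᵢ` decorating the edge from the root to `tᵢ`
and `cᵢ` a cut of `tᵢ`. -/
inductive Cut : Type where
  | node : List (Bool × Cut) → Cut

namespace Cut

mutual
/-- The number of edges in a cut. -/
def size : Cut → ℕ
  | .node l => sizeList l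
/-- The number of edges in a list of decorated edges. -/
def sizeList : List (Bool × Cut) → ℕ
  | [] => 0
  | (b, c) :: cs => (if b then 1 else 0) + size c + sizeList cs
end

mutual
/-- The cut containing no edges. -/
def isEmpty : Cut → Bool
  | .node l => isEmptyList l
/-- Whether a list of decorated edges contains no cut edge. -/
def isEmptyList : List (Bool × Cut) → Bool
  | [] => true
  | (b, c) :: cs => !b && isEmpty c && isEmptyList cs
end

mutual
/-- A cut is admissible if every path from the root to a leaf meets it at most
once, i.e. below a cut edge there is no further cut edge. -/
def admissible : Cut → Bool
  | .node l => admissibleList l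
/-- Admissibility for a list of decorated edges. -/
def admissibleList : List (Bool × Cut) → Bool
  | [] => true
  | (b, c) :: cs => (if b then isEmpty c else admissible c) && admissibleList cs
end

end Cut

namespace PTree

mutual
/-- All cuts (edge subsets) of a planar rooted tree. -/
def cutsOf : PTree → List Cut
  | .node l => (cutsOfList l).map Cut.node
/-- All decorations of a forest. -/
def cutsOfList : List PTree → List (List (Bool × Cut))
  | [] => [[]]
  | t :: ts =>
      (cutsOf t).flatMap (fun c =>
        (cutsOfList ts).flatMap (fun cs => [(true, c) :: cs, (false, c) :: cs]))
end

mutual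
/-- `cutPieces t c = (R^c(t), P^c(t))`: the root component of `t` after removing
the edges of `c`, together with the ordered forest of the remaining components
(in planar depth-first order). -/
def cutPieces : PTree → Cut → PTree × List PTree
  | .node l, .node cs =>
      ((PTree.node (cutPiecesList l cs).1 : PTree), (cutPiecesList l cs).2)
/-- `cutPieces` for forests. -/
def cutPiecesList : List PTree → List (Bool × Cut) → List PTree × List PTree
  | [], _ => ([], [])
  | _ :: _, [] => ([], [])
  | t :: ts, (b, c) :: cs =>
      let p := cutPieces t c
      let q := cutPiecesList ts cs
      if b then (q.1, (p.1 :: p.2) ++ q.2) else (p.1 :: q.1, p.2 ++ q.2)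
end

/-- `R^c(T)`, the component containing the root. -/
def Rcut (t : PTree) (c : Cut) : PTree := (cutPieces t c).1

/-- `P^c(T)`, the ordered forest of components not containing the root. -/
def Pcut (t : PTree) (c : Cut) : List PTree := (cutPieces t c).2

end PTree

/-- `R^c` for rooted trees. -/
noncomputable def RcutR (t : RTree) (c : Cut) : RTree := toR (t.out.Rcut c)

/-- `P^c` for rooted trees: a multiset forest. -/
noncomputable def PcutR (t : RTree) (c : Cut) : Multiset RTree :=
  ((t.out.Pcut c).map toR : List RTree)

/-! ### The Connes–Kreimer Hopf algebra -/

/-- The Connes–Kreimer Hopf algebra over `k`: the free commutative algebra on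
rooted trees, with monomial basis the forests (multisets) of rooted trees. -/
abbrev HK (k : Type*) [CommSemiring k] := AddMonoidAlgebra k (Multiset RTree)

/-- The model for `H_K ⊗ H_K`: monomial basis consists of pairs of forests. -/
abbrev HK2 (k : Type*) [CommSemiring k] :=
  AddMonoidAlgebra k (Multiset RTree × Multiset RTree)

/-- The Connes–Kreimer coproduct of a rooted tree:
`Δ(t) = t ⊗ 1 + Σ_{admissible cuts c of t} P^c(t) ⊗ R^c(t)`
(the empty cut contributing `1 ⊗ t`). -/
noncomputable def ckComulTree (k : Type*) [CommSemiring k] (t : RTree) : HK2 k :=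
  AddMonoidAlgebra.single (({t} : Multiset RTree), (0 : Multiset RTree)) (1 : k) +
  (((PTree.cutsOf t.out).filter (fun c => Cut.admissible c)).map (fun c =>
    AddMonoidAlgebra.single
      (PcutR t c, ({RcutR t c} : Multiset RTree)) (1 : k))).sum

/-- The Connes–Kreimer coproduct of a forest (multiplicative extension). -/
noncomputable def ckComulForest (k : Type*) [CommSemiring k] (w : Multiset RTree) : HK2 k :=
  (w.map (ckComulTree k)).prod

/-- The Connes–Kreimer coproduct on `H_K` (linear extension). -/
noncomputable def ckComul (k : Type*) [CommSemiring k] (f : HK k) : HK2 k :=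
  f.coeff.sum (fun w a => a • ckComulForest k w)

/-- `B₋(t)`: the forest of branches of the root of `t`. -/
noncomputable def branches (t : RTree) : Multiset RTree :=
  match t.out with
  | .node l => ((l.map toR : List RTree) : Multiset RTree)

/-- `id ⊗ B₊` on `H_K ⊗ H_K`. -/
noncomputable def idTensorBplus (k : Type*) [CommSemiring k] (f : HK2 k) : HK2 k :=
  AddMonoidAlgebra.ofCoeff
    (Finsupp.mapDomain (fun p => (p.1, ({RTree.node p.2} : Multiset RTree))) f.coeff)

/-! ### Auxiliary material for the proof -/

section CKAux

open List

/-- List of planar trees to multiset forest of rooted trees. -/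
noncomputable def toM (L : List PTree) : Multiset RTree := (L.map toR : List RTree)

lemma toM_nil : toM [] = 0 := rfl

lemma toM_cons (t : PTree) (L : List PTree) : toM (t :: L) = toR t ::ₘ toM L := rfl

lemma toM_append (L M : List PTree) : toM (L ++ M) = toM L + toM M := by
  simp only [toM, List.map_append]
  rfl

section Generic

variable {α β γ : Type*} {M : Type*} [AddCommMonoid M]

lemma sum_map_flatMap (f : β → M) (g : α → List β) (l : List α) :
    ((l.flatMap g).map f).sum = (l.map (fun a => ((g a).map f).sum)).sum := by
  induction l with
  | nil => simp
  | cons a l ih => simp [List.flatMap_cons, ih]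

lemma sum_filter_map (p : α → Bool) (f : α → M) (l : List α) :
    ((l.filter p).map f).sum = (l.map (fun a => if p a then f a else 0)).sum := by
  induction l with
  | nil => simp
  | cons a l ih => by_cases h : p a <;> simp [List.filter_cons, h, ih]

lemma sum_map_add (f g : α → M) (l : List α) :
    (l.map (fun a => f a + g a)).sum = (l.map f).sum + (l.map g).sum := by
  induction l with
  | nil => simp
  | cons a l ih =>
      simp only [List.map_cons, List.sum_cons, ih]
      abel

lemma forall₂_imp_mem₁ {R S : α → β → Prop} :
    ∀ {l₁ : List α} {l₂ : List β}, (∀ a ∈ l₁, ∀ b, R a b → S a b) →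
      List.Forall₂ R l₁ l₂ → List.Forall₂ S l₁ l₂ := by
  intro l₁ l₂ h hf
  induction hf with
  | nil => constructor
  | @cons a b l₁ l₂ hr _ ih =>
      exact List.Forall₂.cons (h _ List.mem_cons_self _ hr)
        (ih (fun a ha b => h a (List.mem_cons_of_mem _ ha) b))

lemma forall₂_imp_mem₂ {R S : α → β → Prop} :
    ∀ {l₁ : List α} {l₂ : List β}, (∀ a, ∀ b ∈ l₂, R a b → S a b) →
      List.Forall₂ R l₁ l₂ → List.Forall₂ S l₁ l₂ := by
  intro l₁ l₂ h hf
  induction hf with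
  | nil => constructor
  | @cons a b l₁ l₂ hr _ ih =>
      exact List.Forall₂.cons (h _ _ List.mem_cons_self hr)
        (ih (fun a b hb => h a b (List.mem_cons_of_mem _ hb)))

lemma forall₂_trans_mem {R : α → β → Prop} {S : β → γ → Prop} {T : α → γ → Prop} :
    ∀ {l₁ : List α} {l₂ : List β} {l₃ : List γ},
      (∀ a ∈ l₁, ∀ b c, R a b → S b c → T a c) →
      List.Forall₂ R l₁ l₂ → List.Forall₂ S l₂ l₃ → List.Forall₂ T l₁ l₃ := by
  intro l₁ l₂ l₃ h h1 h2
  induction h1 generalizing l₃ with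
  | nil => cases h2; constructor
  | @cons a b l₁ l₂ hr _ ih =>
      cases h2 with
      | cons hs hst =>
          exact List.Forall₂.cons (h _ List.mem_cons_self _ _ hr hs)
            (ih (fun a ha => h a (List.mem_cons_of_mem _ ha)) hst)

lemma map_eq_of_forall₂ {f : α → γ} {g : β → γ} :
    ∀ {l₁ : List α} {l₂ : List β}, List.Forall₂ (fun a b => f a = g b) l₁ l₂ →
      l₁.map f = l₂.map g := by
  intro l₁ l₂ h
  induction h with
  | nil => rfl
  | cons h _ ih => simp [h, ih]

end Generic

/-! ### `PTree.Equiv` is an equivalence relation -/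

theorem PTree.equiv_refl : ∀ t : PTree, PTree.Equiv t t
  | .node l => .node (List.forall₂_same.mpr fun x hx => PTree.equiv_refl x) (List.Perm.refl l)
decreasing_by
  have := List.sizeOf_lt_of_mem hx
  simp only [PTree.node.sizeOf_spec]
  omega

theorem PTree.equiv_symm_aux : ∀ (n : ℕ) (t u : PTree), sizeOf t ≤ n →
    PTree.Equiv t u → PTree.Equiv u t := by
  intro n
  induction n using Nat.strong_induction_on with
  | _ n ih =>
    rintro ⟨l⟩ ⟨m⟩ hn h
    cases h with
    | @node _ _ m' hf hp =>
      have hflip : List.Forall₂ (fun b a => PTree.Equiv a b) m' l :=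
        List.Forall₂.flip hf
      have hsym : List.Forall₂ PTree.Equiv m' l := by
        refine forall₂_imp_mem₂ ?_ hflip
        intro b a ha hr
        have h1 : sizeOf a < sizeOf l := List.sizeOf_lt_of_mem ha
        have h2 : sizeOf (PTree.node l) = 1 + sizeOf l := by simp
        exact ih (sizeOf a) (by omega) a b le_rfl hr
      have hcomp : Relation.Comp List.Perm (List.Forall₂ PTree.Equiv) m l :=
        ⟨m', hp.symm, hsym⟩
      rw [← List.forall₂_comp_perm_eq_perm_comp_forall₂] at hcomp
      obtain ⟨q, hq, hql⟩ := hcomp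
      exact .node hq hql

theorem PTree.equiv_symm {t u : PTree} (h : PTree.Equiv t u) : PTree.Equiv u t :=
  PTree.equiv_symm_aux (sizeOf t) t u le_rfl h

theorem PTree.equiv_trans_aux : ∀ (n : ℕ) (t u v : PTree), sizeOf t ≤ n →
    PTree.Equiv t u → PTree.Equiv u v → PTree.Equiv t v := by
  intro n
  induction n using Nat.strong_induction_on with
  | _ n ih =>
    rintro ⟨l⟩ ⟨m⟩ ⟨p⟩ hn h1 h2
    cases h1 with
    | @node _ _ m₁ hf1 hp1 =>
      cases h2 with
      | @node _ _ p₁ hf2 hp2 =>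
        have hcomp : Relation.Comp List.Perm (List.Forall₂ PTree.Equiv) m₁ p₁ :=
          ⟨m, hp1, hf2⟩
        rw [← List.forall₂_comp_perm_eq_perm_comp_forall₂] at hcomp
        obtain ⟨q, hq, hqp⟩ := hcomp
        have hlq : List.Forall₂ PTree.Equiv l q := by
          refine forall₂_trans_mem ?_ hf1 hq
          intro a ha b c hab hbc
          have h1 : sizeOf a < sizeOf l := List.sizeOf_lt_of_mem ha
          have h2 : sizeOf (PTree.node l) = 1 + sizeOf l := by simp
          exact ih (sizeOf a) (by omega) a b c le_rfl hab hbc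
        exact .node hlq (hqp.trans hp2)

theorem PTree.equiv_trans {t u v : PTree} (h1 : PTree.Equiv t u) (h2 : PTree.Equiv u v) :
    PTree.Equiv t v :=
  PTree.equiv_trans_aux (sizeOf t) t u v le_rfl h1 h2

theorem PTree.equiv_equivalence : Equivalence PTree.Equiv :=
  ⟨PTree.equiv_refl, PTree.equiv_symm, PTree.equiv_trans⟩

lemma equiv_of_toR_eq {t u : PTree} (h : toR t = toR u) : PTree.Equiv t u :=
  (PTree.equiv_equivalence.eqvGen_iff).mp (Quot.eqvGen_exact h)

lemma toR_out (t : PTree) : toR ((toR t).out) = toR t := Quot.out_eq (toR t)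

lemma equiv_out (t : PTree) : PTree.Equiv ((toR t).out) t :=
  equiv_of_toR_eq (toR_out t)

/-- `B₊` commutes with passing to rooted trees. -/
lemma node_toM (L : List PTree) : RTree.node (toM L) = toR (PTree.node L) := by
  have h : PTree.Equiv (PTree.node L) (PTree.node ((toM L).toList.map RTree.out)) := by
    refine .node (m' := L.map (fun t => (toR t).out)) ?_ ?_
    · rw [List.forall₂_map_right_iff]
      exact List.forall₂_same.mpr fun x _ => PTree.equiv_symm (equiv_out x)
    · have h1 : (L.map toR).Perm ((toM L).toList) := by
        rw [← Multiset.coe_eq_coe, Multiset.coe_toList]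
        rfl
      have h2 := h1.map RTree.out
      simpa [List.map_map, Function.comp_def] using h2
  rw [RTree.node]
  exact (Quot.sound h).symm

/-! ### Cut combinatorics -/

lemma mem_cutsOfList_cons {t : PTree} {ts : List PTree} {cs : List (Bool × Cut)} :
    cs ∈ PTree.cutsOfList (t :: ts) ↔
      ∃ c ∈ PTree.cutsOf t, ∃ cs' ∈ PTree.cutsOfList ts,
        cs = (true, c) :: cs' ∨ cs = (false, c) :: cs' := by
  simp only [PTree.cutsOfList, List.mem_flatMap, List.mem_cons, List.mem_singleton,
    List.not_mem_nil, or_false]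

theorem empty_piecesL : ∀ (n : ℕ) (l : List PTree) (cs : List (Bool × Cut)), sizeOf l ≤ n →
    cs ∈ PTree.cutsOfList l → Cut.isEmptyList cs → PTree.cutPiecesList l cs = (l, []) := by
  intro n
  induction n using Nat.strong_induction_on with
  | _ n ih =>
    intro l cs hn hmem hemp
    match l, cs with
    | [], cs =>
        simp only [PTree.cutsOfList, List.mem_singleton] at hmem
        subst hmem
        simp [PTree.cutPiecesList]
    | t :: ts, cs =>
        rw [mem_cutsOfList_cons] at hmem
        obtain ⟨c, hc, cs', hcs', hor⟩ := hmem
        rcases hor with rfl | rfl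
        · simp [Cut.isEmptyList] at hemp
        · simp only [Cut.isEmptyList, Bool.not_false, Bool.true_and, Bool.and_eq_true] at hemp
          obtain ⟨hec, hecs⟩ := hemp
          -- head piece
          obtain ⟨l'⟩ := t
          simp only [PTree.cutsOf, List.mem_map] at hc
          obtain ⟨cs'', hcs'', rfl⟩ := hc
          have hsz1 : sizeOf l' < n := by
            have : sizeOf (PTree.node l' :: ts) = 1 + (1 + sizeOf l') + sizeOf ts := by simp
            omega
          have hsz2 : sizeOf ts < n := by
            have : sizeOf (PTree.node l' :: ts) = 1 + (1 + sizeOf l') + sizeOf ts := by simp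
            omega
          have hhead : PTree.cutPiecesList l' cs'' = (l', []) :=
            ih (sizeOf l') hsz1 l' cs'' le_rfl hcs''
              (by simpa [Cut.isEmpty] using hec)
          have htail : PTree.cutPiecesList ts cs' = (ts, []) :=
            ih (sizeOf ts) hsz2 ts cs' le_rfl hcs' hecs
          simp [PTree.cutPiecesList, PTree.cutPieces, hhead, htail]

lemma empty_pieces (t : PTree) (c : Cut) (hc : c ∈ PTree.cutsOf t) (he : Cut.isEmpty c) :
    PTree.cutPieces t c = (t, []) := by
  obtain ⟨l⟩ := t
  simp only [PTree.cutsOf, List.mem_map] at hc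
  obtain ⟨cs, hcs, rfl⟩ := hc
  have h := empty_piecesL (sizeOf l) l cs le_rfl hcs (by simpa [Cut.isEmpty] using he)
  simp [PTree.cutPieces, h]

end CKAux

section CKMain

variable (k : Type*) [CommSemiring k]

/-- Abbreviation for a basis monomial of `HK2`. -/
noncomputable def S (a b : Multiset RTree) : HK2 k :=
  AddMonoidAlgebra.single (a, b) (1 : k)

lemma S_mul_S (a b a' b' : Multiset RTree) : S k a b * S k a' b' = S k (a + a') (b + b') := by
  simp [S, AddMonoidAlgebra.single_mul_single, Prod.mk_add_mk]

lemma S_zero_zero : S k 0 0 = 1 := by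
  rw [S, AddMonoidAlgebra.one_def, Prod.mk_zero_zero]

/-- The sum over admissible cuts of a planar tree. -/
noncomputable def cd (p : PTree) : HK2 k :=
  (((PTree.cutsOf p).filter fun c => Cut.admissible c).map fun c =>
    S k (toM (p.Pcut c)) {toR (p.Rcut c)}).sum

/-- The sum over admissible decorations of a planar forest. -/
noncomputable def cdL (l : List PTree) : HK2 k :=
  (((PTree.cutsOfList l).filter fun cs => Cut.admissibleList cs).map fun cs =>
    S k (toM (PTree.cutPiecesList l cs).2) (toM (PTree.cutPiecesList l cs).1)).sum

/-- The full (planar) coproduct of a single tree. -/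
noncomputable def Gp (t : PTree) : HK2 k := S k {toR t} 0 + cd k t

/-- Summing anything over the empty cuts of a forest picks it up exactly once. -/
theorem sumE_L : ∀ (n : ℕ) (l : List PTree) (x : HK2 k), sizeOf l ≤ n →
    ((PTree.cutsOfList l).map fun cs => if Cut.isEmptyList cs then x else 0).sum = x := by
  intro n
  induction n using Nat.strong_induction_on with
  | _ n ih =>
    intro l x hn
    match l with
    | [] => simp [PTree.cutsOfList, Cut.isEmptyList]
    | (PTree.node l') :: ts =>
        have hsz1 : sizeOf l' < n := by
          have : sizeOf (PTree.node l' :: ts) = 1 + (1 + sizeOf l') + sizeOf ts := by simp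
          omega
        have hsz2 : sizeOf ts < n := by
          have : sizeOf (PTree.node l' :: ts) = 1 + (1 + sizeOf l') + sizeOf ts := by simp
          omega
        rw [show PTree.cutsOfList (PTree.node l' :: ts) =
          (PTree.cutsOf (PTree.node l')).flatMap (fun c =>
            (PTree.cutsOfList ts).flatMap fun cs => [(true, c) :: cs, (false, c) :: cs]) from rfl]
        rw [sum_map_flatMap]
        have step : ∀ c ∈ PTree.cutsOf (PTree.node l'),
            (((PTree.cutsOfList ts).flatMap fun cs =>
                [(true, c) :: cs, (false, c) :: cs]).map fun cs =>
                  if Cut.isEmptyList cs then x else 0).sum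
            = (if Cut.isEmpty c then x else 0) := by
          intro c _
          rw [sum_map_flatMap]
          have inner : ∀ cs ∈ PTree.cutsOfList ts,
              (([(true, c) :: cs, (false, c) :: cs]).map fun cs' =>
                if Cut.isEmptyList cs' then x else 0).sum
              = (if Cut.isEmpty c then (if Cut.isEmptyList cs then x else 0) else 0) := by
            intro cs _
            simp only [List.map_cons, List.map_nil, List.sum_cons, List.sum_nil, add_zero]
            by_cases h1 : Cut.isEmpty c <;> by_cases h2 : Cut.isEmptyList cs <;>
              simp [Cut.isEmptyList, h1, h2]
          rw [List.map_congr_left inner]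
          by_cases h1 : Cut.isEmpty c
          · simp only [h1, if_true]
            exact ih (sizeOf ts) hsz2 ts x le_rfl
          · simp [h1]
        rw [List.map_congr_left step]
        rw [show PTree.cutsOf (PTree.node l') = (PTree.cutsOfList l').map Cut.node from rfl]
        rw [List.map_map]
        have : ((fun c => if Cut.isEmpty c then x else 0) ∘ Cut.node)
            = fun cs => if Cut.isEmptyList cs then x else 0 := by
          funext cs
          by_cases h : Cut.isEmptyList cs <;> simp [Cut.isEmpty, h]
        rw [this]
        exact ih (sizeOf l') hsz1 l' x le_rfl

lemma sumE (t : PTree) (x : HK2 k) :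
    ((PTree.cutsOf t).map fun c => if Cut.isEmpty c then x else 0).sum = x := by
  obtain ⟨l⟩ := t
  rw [show PTree.cutsOf (PTree.node l) = (PTree.cutsOfList l).map Cut.node from rfl,
    List.map_map]
  have : ((fun c => if Cut.isEmpty c then x else 0) ∘ Cut.node)
      = fun cs => if Cut.isEmptyList cs then x else 0 := by
    funext cs
    by_cases h : Cut.isEmptyList cs <;> simp [Cut.isEmpty, h]
  rw [this]
  exact sumE_L k (sizeOf l) l x le_rfl

lemma cdL_nil : cdL k [] = 1 := by
  have h : PTree.cutPiecesList [] [] = ([], []) := by simp [PTree.cutPiecesList]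
  have ha : Cut.admissibleList [] = true := rfl
  simp [cdL, PTree.cutsOfList, List.filter_cons, ha, h, toM_nil, S_zero_zero]

lemma cdL_cons (t : PTree) (ts : List PTree) :
    cdL k (t :: ts) = Gp k t * cdL k ts := by
  rw [cdL, sum_filter_map]
  rw [show PTree.cutsOfList (t :: ts) = (PTree.cutsOf t).flatMap (fun c =>
        (PTree.cutsOfList ts).flatMap fun cs => [(true, c) :: cs, (false, c) :: cs]) from rfl]
  rw [sum_map_flatMap]
  have step : ∀ c ∈ PTree.cutsOf t,
      (((PTree.cutsOfList ts).flatMap fun cs =>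
          [(true, c) :: cs, (false, c) :: cs]).map fun cs =>
            if Cut.admissibleList cs then
              S k (toM (PTree.cutPiecesList (t :: ts) cs).2)
                (toM (PTree.cutPiecesList (t :: ts) cs).1) else 0).sum
      = ((if Cut.isEmpty c then S k {toR t} 0 else 0) +
          (if Cut.admissible c then S k (toM (t.Pcut c)) {toR (t.Rcut c)} else 0)) * cdL k ts := by
    intro c hc
    rw [sum_map_flatMap]
    have inner : ∀ cs ∈ PTree.cutsOfList ts,
        (([(true, c) :: cs, (false, c) :: cs]).map fun cs' =>
          if Cut.admissibleList cs' then
            S k (toM (PTree.cutPiecesList (t :: ts) cs').2)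
              (toM (PTree.cutPiecesList (t :: ts) cs').1) else 0).sum
        = ((if Cut.isEmpty c then S k {toR t} 0 else 0) +
            (if Cut.admissible c then S k (toM (t.Pcut c)) {toR (t.Rcut c)} else 0)) *
          (if Cut.admissibleList cs then
            S k (toM (PTree.cutPiecesList ts cs).2) (toM (PTree.cutPiecesList ts cs).1)
            else 0) := by
      intro cs _
      simp only [List.map_cons, List.map_nil, List.sum_cons, List.sum_nil, add_zero]
      rw [add_mul]
      have htrue : (if Cut.admissibleList ((true, c) :: cs) then
            S k (toM (PTree.cutPiecesList (t :: ts) ((true, c) :: cs)).2)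
              (toM (PTree.cutPiecesList (t :: ts) ((true, c) :: cs)).1) else 0)
          = (if Cut.isEmpty c then S k {toR t} 0 else 0) *
            (if Cut.admissibleList cs then
              S k (toM (PTree.cutPiecesList ts cs).2) (toM (PTree.cutPiecesList ts cs).1)
              else 0) := by
        by_cases h1 : Cut.isEmpty c
        · by_cases h2 : Cut.admissibleList cs
          · have hadm : Cut.admissibleList ((true, c) :: cs) = true := by
              simp [Cut.admissibleList, h1, h2]
            have hp := empty_pieces t c hc h1
            have hcp : PTree.cutPiecesList (t :: ts) ((true, c) :: cs)
                = ((PTree.cutPiecesList ts cs).1,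
                    t :: (PTree.cutPiecesList ts cs).2) := by
              simp [PTree.cutPiecesList, hp]
            rw [if_pos hadm, if_pos h1, if_pos h2, hcp, S_mul_S]
            simp [toM_cons, Multiset.singleton_add]
          · have hadm : Cut.admissibleList ((true, c) :: cs) = false := by
              simp [Cut.admissibleList, h2]
            simp [hadm, h2]
        · have hadm : Cut.admissibleList ((true, c) :: cs) = false := by
            simp [Cut.admissibleList, h1]
          simp [hadm, h1]
      have hfalse : (if Cut.admissibleList ((false, c) :: cs) then
            S k (toM (PTree.cutPiecesList (t :: ts) ((false, c) :: cs)).2)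
              (toM (PTree.cutPiecesList (t :: ts) ((false, c) :: cs)).1) else 0)
          = (if Cut.admissible c then S k (toM (t.Pcut c)) {toR (t.Rcut c)} else 0) *
            (if Cut.admissibleList cs then
              S k (toM (PTree.cutPiecesList ts cs).2) (toM (PTree.cutPiecesList ts cs).1)
              else 0) := by
        by_cases h1 : Cut.admissible c
        · by_cases h2 : Cut.admissibleList cs
          · have hadm : Cut.admissibleList ((false, c) :: cs) = true := by
              simp [Cut.admissibleList, h1, h2]
            have hcp : PTree.cutPiecesList (t :: ts) ((false, c) :: cs)
                = ((PTree.cutPieces t c).1 :: (PTree.cutPiecesList ts cs).1,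
                    (PTree.cutPieces t c).2 ++ (PTree.cutPiecesList ts cs).2) := by
              simp [PTree.cutPiecesList]
            rw [if_pos hadm, if_pos h1, if_pos h2, hcp, S_mul_S]
            simp [PTree.Pcut, PTree.Rcut, toM_cons, toM_append, Multiset.singleton_add]
          · have hadm : Cut.admissibleList ((false, c) :: cs) = false := by
              simp [Cut.admissibleList, h2]
            simp [hadm, h2]
        · have hadm : Cut.admissibleList ((false, c) :: cs) = false := by
            simp [Cut.admissibleList, h1]
          simp [hadm, h1]
      rw [htrue, hfalse]
    rw [List.map_congr_left inner]
    rw [List.sum_map_mul_left]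
    rw [cdL, sum_filter_map]
  rw [List.map_congr_left step]
  have : ((PTree.cutsOf t).map fun c =>
      ((if Cut.isEmpty c then S k {toR t} 0 else 0) +
        (if Cut.admissible c then S k (toM (t.Pcut c)) {toR (t.Rcut c)} else 0)) * cdL k ts).sum
      = (((PTree.cutsOf t).map fun c =>
          (if Cut.isEmpty c then S k {toR t} 0 else 0) +
            (if Cut.admissible c then S k (toM (t.Pcut c)) {toR (t.Rcut c)} else 0)).sum)
        * cdL k ts := by
    rw [← List.sum_map_mul_right]
  rw [this, sum_map_add, sumE, ← sum_filter_map]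
  rw [Gp, cd]

lemma cdL_prod (l : List PTree) : cdL k l = (l.map (Gp k)).prod := by
  induction l with
  | nil => simp [cdL_nil]
  | cons t ts ih => rw [cdL_cons, ih, List.map_cons, List.prod_cons]

lemma cd_node (l : List PTree) : cd k (PTree.node l) = idTensorBplus k (cdL k l) := by
  rw [cd, cdL]
  rw [show PTree.cutsOf (PTree.node l) = (PTree.cutsOfList l).map Cut.node from rfl]
  rw [List.filter_map, List.map_map]
  rw [idTensorBplus]
  rw [show AddMonoidAlgebra.ofCoeff (Finsupp.mapDomain (fun p : Multiset RTree × Multiset RTree =>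
        (p.1, ({RTree.node p.2} : Multiset RTree)))
      ((((PTree.cutsOfList l).filter fun cs => Cut.admissibleList cs).map fun cs =>
        S k (toM (PTree.cutPiecesList l cs).2) (toM (PTree.cutPiecesList l cs).1)).sum).coeff)
    = ((AddMonoidAlgebra.coeffAddEquiv.symm.toAddMonoidHom.comp
        ((Finsupp.mapDomain.addMonoidHom (fun p : Multiset RTree × Multiset RTree =>
        (p.1, ({RTree.node p.2} : Multiset RTree)))).comp
          AddMonoidAlgebra.coeffAddEquiv.toAddMonoidHom))
      ((((PTree.cutsOfList l).filter fun cs => Cut.admissibleList cs).map fun cs =>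
        S k (toM (PTree.cutPiecesList l cs).2) (toM (PTree.cutPiecesList l cs).1)).sum)) from rfl]
  rw [map_list_sum, List.map_map]
  congr 1
  apply List.map_congr_left
  intro cs hcs
  have h1 : (fun c => Cut.admissible c) ∘ Cut.node = fun cs => Cut.admissibleList cs := by
    funext cs
    simp [Cut.admissible]
  have h2 : PTree.Pcut (PTree.node l) (Cut.node cs) = (PTree.cutPiecesList l cs).2 := by
    simp [PTree.Pcut, PTree.cutPieces]
  have h3 : PTree.Rcut (PTree.node l) (Cut.node cs) = PTree.node (PTree.cutPiecesList l cs).1 := by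
    simp [PTree.Rcut, PTree.cutPieces]
  show S k _ _ = AddMonoidAlgebra.ofCoeff (Finsupp.mapDomain _ (Finsupp.single _ _))
  simp only [Function.comp, h2, h3, Finsupp.mapDomain.addMonoidHom_apply, S,
    Finsupp.mapDomain_single]
  rw [node_toM]
  rfl

theorem cd_congr : ∀ (n : ℕ) (t u : PTree), sizeOf t ≤ n → PTree.Equiv t u →
    cd k t = cd k u := by
  intro n
  induction n using Nat.strong_induction_on with
  | _ n ih =>
    rintro ⟨l⟩ ⟨m⟩ hn h
    cases h with
    | @node _ _ m' hf hp =>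
      rw [cd_node, cd_node, cdL_prod, cdL_prod]
      have h1 : l.map (Gp k) = m'.map (Gp k) := by
        apply map_eq_of_forall₂
        refine forall₂_imp_mem₁ ?_ hf
        intro a ha b hab
        have hsz : sizeOf a < sizeOf l := List.sizeOf_lt_of_mem ha
        have hsz2 : sizeOf (PTree.node l) = 1 + sizeOf l := by simp
        have htoR : toR a = toR b := Quot.sound hab
        rw [Gp, Gp, htoR, ih (sizeOf a) (by omega) a b le_rfl hab]
      have h2 : (m'.map (Gp k)).prod = (m.map (Gp k)).prod := (hp.map (Gp k)).prod_eq
      rw [h1, h2]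

lemma ck_eq_G (s : PTree) : ckComulTree k (toR s) = Gp k s := by
  have h0 : ckComulTree k (toR s)
      = AddMonoidAlgebra.single (({toR s} : Multiset RTree), (0 : Multiset RTree)) (1 : k)
        + cd k ((toR s).out) := rfl
  rw [h0, Gp, cd_congr k (sizeOf ((toR s).out)) _ s le_rfl (equiv_out s)]
  rfl

end CKMain

/-- The two descriptions of the Connes–Kreimer coproduct agree:
for every rooted tree `t`,
`Δ(t) = t ⊗ 1 + (id ⊗ B₊)(Δ(B₋(t)))`, where `Δ` is the admissible-cut
coproduct, extended multiplicatively to forests. -/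
theorem ck_coproduct_recursion (k : Type*) [Field k] [CharZero k] (t : RTree) :
    ckComulTree k t
      = AddMonoidAlgebra.single (({t} : Multiset RTree), (0 : Multiset RTree)) (1 : k)
        + idTensorBplus k (ckComulForest k (branches t)) := by
  obtain ⟨l, hl⟩ : ∃ l, t.out = PTree.node l := by
    cases h : t.out with | node l => exact ⟨l, rfl⟩
  have h0 : ckComulTree k t
      = AddMonoidAlgebra.single (({t} : Multiset RTree), (0 : Multiset RTree)) (1 : k)
        + cd k t.out := rfl
  have hb : branches t = toM l := by
    unfold branches
    rw [hl]
    rfl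
  rw [h0, hl, cd_node]
  congr 1
  congr 1
  rw [hb, ckComulForest, toM, Multiset.map_coe, Multiset.prod_coe, List.map_map, cdL_prod]
  have hmap : l.map (ckComulTree k ∘ toR) = l.map (Gp k) :=
    List.map_congr_left (fun a _ => ck_eq_G k a)
  rw [hmap]
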